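/- Let q ∈ ℂ, let 0 < r < 1, and let w ∈ ℂ satisfy |1 + w| > r. Then the counterclockwise circle integral over the circle of radius r centered at −1 of the function m ↦ (−1/m + q/(1+m))² / (m − w)² equals 4πi·(q/(1+w)² + q²/(1+w)³). -/

import Mathlib

open Metric Real Complex

private theorem circleIntegral_add' {f g : ℂ → ℂ} {c : ℂ} {R : ℝ}
    (hf : CircleIntegrable f c R) (hg : CircleIntegrable g c R) :
    (∮ z in C(c, R), (f z + g z)) = (∮ z in C(c, R), f z) + ∮ z in C(c, R), g z := by
  simp only [circleIntegral, smul_add, intervalIntegral.integral_add hf.out hg.out]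

private theorem stmt15_base (w m : ℂ) (h1 : 1 + m ≠ 0) (hmw : m - w ≠ 0) (hw1 : 1 + w ≠ 0) :
    (1+m)⁻¹ * (m-w)⁻¹ = ((m-w)⁻¹ - (1+m)⁻¹) * (1+w)⁻¹ := by
  field_simp
  ring

private theorem stmt15_idA (q m : ℂ) (h0 : m ≠ 0) (h1 : 1 + m ≠ 0) :
    (-1/m + q/(1+m))^2 = (1/m^2 - 2*q/m) + 2*q/(1+m) + q^2/(1+m)^2 := by
  field_simp [h0, h1]
  ring

private theorem stmt15_idB (q w m : ℂ) (h1 : 1 + m ≠ 0) (hmw : m - w ≠ 0) (hw1 : 1 + w ≠ 0) :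
    (2*q/(1+m))/(m-w)^2
      = 2*q/(1+w) /(m-w)^2 - (2*q/(1+w)^2)/(m-w) + (2*q/(1+w)^2) * (m+1)⁻¹ := by
  simp only [div_eq_mul_inv, ← inv_pow]
  linear_combination (2*q*((m-w)⁻¹ - (1+w)⁻¹)) * stmt15_base w m h1 hmw hw1

private theorem stmt15_idC (q w m : ℂ) (h1 : 1 + m ≠ 0) (hmw : m - w ≠ 0) (hw1 : 1 + w ≠ 0) :
    (q^2/(1+m)^2)/(m-w)^2
      = (q^2/(1+w)^2)/(m-w)^2 - (2*q^2/(1+w)^3)/(m-w)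
        + (2*q^2/(1+w)^3) * (m+1)⁻¹ + (q^2/(1+w)^2) * ((m+1)^2)⁻¹ := by
  simp only [div_eq_mul_inv, ← inv_pow]
  linear_combination (q^2*((1+m)⁻¹*(m-w)⁻¹ + ((m-w)⁻¹ - (1+m)⁻¹)*(1+w)⁻¹)
    - 2*q^2*((1+w)⁻¹)^2) * stmt15_base w m h1 hmw hw1

set_option maxHeartbeats 1000000 in
/-- For `q ∈ ℂ`, `0 < r < 1`, and `w ∈ ℂ` with `|1 + w| > r`, the
counterclockwise circle integral around `−1` of `m ↦ (−1/m + q/(1+m))²/(m − w)²`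
equals `4πi·(q/(1+w)² + q²/(1+w)³)`. -/
theorem stmt_15 (q : ℂ) (r : ℝ) (hr0 : 0 < r) (hr1 : r < 1)
    (w : ℂ) (hw : r < ‖1 + w‖) :
    (∮ m in C(-1, r), (-1 / m + q / (1 + m)) ^ 2 / (m - w) ^ 2)
      = 4 * Real.pi * Complex.I * (q / (1 + w) ^ 2 + q ^ 2 / (1 + w) ^ 3) := by
  have hw1 : (1 : ℂ) + w ≠ 0 := by
    intro h
    rw [h] at hw
    simp at hw
    linarith
  set a : ℂ := 2 * q / (1 + w) ^ 2 + 2 * q ^ 2 / (1 + w) ^ 3 with ha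
  set b : ℂ := q ^ 2 / (1 + w) ^ 2 with hb
  set c : ℂ := -(2 * q / (1 + w) ^ 2 + 2 * q ^ 2 / (1 + w) ^ 3) with hc
  set d : ℂ := 2 * q / (1 + w) + q ^ 2 / (1 + w) ^ 2 with hd
  -- facts about points on / in the disk
  have hball : ∀ m : ℂ, m ∈ closedBall (-1 : ℂ) r → m ≠ 0 ∧ m - w ≠ 0 := by
    intro m hm
    rw [mem_closedBall, Complex.dist_eq] at hm
    constructor
    · intro h
      rw [h] at hm
      simp at hm
      linarith
    · intro h
      have hmw : m = w := sub_eq_zero.mp h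
      rw [hmw] at hm
      have : ‖1 + w‖ = ‖w - -1‖ := by ring_nf
      rw [this] at hw
      linarith
  have hsph : ∀ m : ℂ, m ∈ sphere (-1 : ℂ) r → m ≠ 0 ∧ m - w ≠ 0 ∧ m + 1 ≠ 0 := by
    intro m hm
    obtain ⟨h0, hmw⟩ := hball m (sphere_subset_closedBall hm)
    refine ⟨h0, hmw, ?_⟩
    rw [mem_sphere_iff_norm] at hm
    intro h
    have : m - -1 = m + 1 := by ring
    rw [this, h] at hm
    simp at hm
    linarith
  set T1 : ℂ → ℂ := fun m => (1 / m ^ 2 - 2 * q / m) / (m - w) ^ 2 + c / (m - w) + d / (m - w) ^ 2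
    with hT1
  set T2 : ℂ → ℂ := fun m => a * (m - (-1))⁻¹ with hT2
  set T3 : ℂ → ℂ := fun m => b * (m - (-1)) ^ (-2 : ℤ) with hT3
  -- the partial-fraction decomposition on the sphere
  have key : Set.EqOn (fun m : ℂ => (-1 / m + q / (1 + m)) ^ 2 / (m - w) ^ 2)
      (fun m => T1 m + (T2 m + T3 m)) (sphere (-1 : ℂ) r) := by
    intro m hm
    obtain ⟨h0, hmw, h1⟩ := hsph m hm
    simp only [hT1, hT2, hT3, ha, hb, hc, hd, sub_neg_eq_add, zpow_neg]
    have h1' : (1 : ℂ) + m ≠ 0 := by rwa [add_comm]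
    have hz2 : ((m + 1) : ℂ) ^ (2 : ℤ) = (m + 1) ^ (2 : ℕ) := by rw [zpow_two, sq]
    rw [hz2]
    calc (-1 / m + q / (1 + m)) ^ 2 / (m - w) ^ 2
        = ((1/m^2 - 2*q/m) + 2*q/(1+m) + q^2/(1+m)^2) / (m - w) ^ 2 := by
          rw [stmt15_idA q m h0 h1']
      _ = (1/m^2 - 2*q/m)/(m-w)^2 + (2*q/(1+m))/(m-w)^2 + (q^2/(1+m)^2)/(m-w)^2 := by
          rw [add_div, add_div]
      _ = _ := by
          rw [stmt15_idB q w m h1' hmw hw1, stmt15_idC q w m h1' hmw hw1]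
          ring
  rw [circleIntegral.integral_congr hr0.le key]
  -- integrability of the pieces
  have hi1 : CircleIntegrable T1 (-1) r := by
    apply ContinuousOn.circleIntegrable hr0.le
    intro m hm
    obtain ⟨h0, hmw, _⟩ := hsph m hm
    apply ContinuousAt.continuousWithinAt
    have hm2 : (m : ℂ) ^ 2 ≠ 0 := pow_ne_zero _ h0
    have hmw2 : (m - w) ^ 2 ≠ 0 := pow_ne_zero _ hmw
    fun_prop (disch := assumption)
  have hi2 : CircleIntegrable T2 (-1) r := by
    apply ContinuousOn.circleIntegrable hr0.le
    intro m hm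
    obtain ⟨_, _, h1⟩ := hsph m hm
    apply ContinuousAt.continuousWithinAt
    have h1' : m - (-1) ≠ 0 := by rw [sub_neg_eq_add]; exact h1
    fun_prop (disch := assumption)
  have hi3 : CircleIntegrable T3 (-1) r := by
    apply ContinuousOn.circleIntegrable hr0.le
    intro m hm
    obtain ⟨_, _, h1⟩ := hsph m hm
    apply ContinuousAt.continuousWithinAt
    have h1' : m - (-1) ≠ 0 := by rw [sub_neg_eq_add]; exact h1
    have : ContinuousAt (fun m : ℂ => (m - (-1)) ^ (-2 : ℤ)) m := by
      apply ContinuousAt.zpow₀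
      · fun_prop
      · exact Or.inl h1'
    exact this.const_smul b
  have hi23 : CircleIntegrable (fun z => T2 z + T3 z) (-1) r := hi2.add hi3
  rw [circleIntegral_add' hi1 hi23, circleIntegral_add' hi2 hi3]
  -- T1 integrates to zero by Cauchy–Goursat
  have hI1 : (∮ m in C(-1, r), T1 m) = 0 := by
    apply Complex.circleIntegral_eq_zero_of_differentiable_on_off_countable hr0.le
      (Set.countable_empty)
    · intro m hm
      obtain ⟨h0, hmw⟩ := hball m hm
      apply ContinuousAt.continuousWithinAt
      have hm2 : (m : ℂ) ^ 2 ≠ 0 := pow_ne_zero _ h0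
      have hmw2 : (m - w) ^ 2 ≠ 0 := pow_ne_zero _ hmw
      fun_prop (disch := assumption)
    · intro m hm
      obtain ⟨h0, hmw⟩ := hball m (ball_subset_closedBall hm.1)
      have hm2 : (m : ℂ) ^ 2 ≠ 0 := pow_ne_zero _ h0
      have hmw2 : (m - w) ^ 2 ≠ 0 := pow_ne_zero _ hmw
      fun_prop (disch := assumption)
  have hI2 : (∮ m in C(-1, r), T2 m) = a * (2 * Real.pi * Complex.I) := by
    have heq : (∮ m in C(-1, r), T2 m) = ∮ m in C(-1, r), a • (m - (-1))⁻¹ := by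
      simp [hT2, smul_eq_mul]
    rw [heq, circleIntegral.integral_smul,
      circleIntegral.integral_sub_inv_of_mem_ball (mem_ball_self hr0)]
    simp [smul_eq_mul]
  have hI3 : (∮ m in C(-1, r), T3 m) = 0 := by
    have heq : (∮ m in C(-1, r), T3 m) = ∮ m in C(-1, r), b • (m - (-1)) ^ (-2 : ℤ) := by
      simp [hT3, smul_eq_mul]
    rw [heq, circleIntegral.integral_smul,
      circleIntegral.integral_sub_zpow_of_ne (by decide) (-1) (-1) r]
    simp
  rw [hI1, hI2, hI3, ha]
  ring
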